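/- Let G be a 3-γc-critical graph with minimum degree δ ≥ 2. Then α(G) ≤ δ + 2. Moreover, if α(G) = δ + 2, then G contains exactly one vertex x of degree δ, and the closed neighborhood N[x] induces a clique in G. -/

import Mathlib

open SimpleGraph Finset

variable {V : Type*}

/-- The graph `G` with the extra edge `uv` added. -/
def SimpleGraph.addEdge (G : SimpleGraph V) (u v : V) : SimpleGraph V :=
  G ⊔ SimpleGraph.fromEdgeSet {s(u, v)}

/-- `D` is a connected dominating set of `G`. -/
def SimpleGraph.IsCDS (G : SimpleGraph V) (D : Set V) : Prop :=
  (∀ v : V, v ∈ D ∨ ∃ u ∈ D, G.Adj u v) ∧ (G.induce D).Connected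

/-- The connected domination number. -/
noncomputable def SimpleGraph.cdn [Fintype V] (G : SimpleGraph V) : ℕ :=
  sInf {n | ∃ D : Finset V, D.card = n ∧ G.IsCDS ↑D}

/-- `G` is a `3`-`γ_c`-critical graph. -/
def SimpleGraph.IsCritical3 [Fintype V] (G : SimpleGraph V) : Prop :=
  G.Connected ∧ G.cdn = 3 ∧
    ∀ u v : V, u ≠ v → ¬G.Adj u v → (G.addEdge u v).cdn < 3

/-- `s` is an independent set of `G`. -/
def SimpleGraph.IsIndepSet' (G : SimpleGraph V) (s : Set V) : Prop :=
  s.Pairwise (fun a b => ¬G.Adj a b)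

/-- The independence number. -/
noncomputable def SimpleGraph.indepNum' [Fintype V] (G : SimpleGraph V) : ℕ :=
  sSup {n | ∃ s : Finset V, G.IsIndepSet' ↑s ∧ s.card = n}

/-- `S` is a vertex cut: removing it leaves a non-connected graph. -/
def SimpleGraph.IsVertexCut [Fintype V] (G : SimpleGraph V) (S : Finset V) : Prop :=
  ¬(G.induce ((↑S : Set V)ᶜ)).Connected

/-- The vertex connectivity: minimum size of a vertex cut. -/
noncomputable def SimpleGraph.conn [Fintype V] (G : SimpleGraph V) : ℕ :=
  sInf {n | ∃ S : Finset V, S.card = n ∧ G.IsVertexCut S}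

set_option linter.unusedSectionVars false

lemma addEdge_adj (G : SimpleGraph V) (u v a b : V) :
    (G.addEdge u v).Adj a b ↔ G.Adj a b ∨ ((a = u ∧ b = v ∨ a = v ∧ b = u) ∧ a ≠ b) := by
  simp [SimpleGraph.addEdge, SimpleGraph.fromEdgeSet_adj, Sym2.eq_iff, sup_adj]

lemma singleton_conn (G : SimpleGraph V) (w : V) : (G.induce {w}).Connected := by
  rw [SimpleGraph.connected_iff]
  refine ⟨?_, ⟨⟨w, rfl⟩⟩⟩
  rintro ⟨a, ha⟩ ⟨b, hb⟩
  simp only [Set.mem_singleton_iff] at ha hb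
  subst ha; subst hb
  rfl

lemma pair_conn (G : SimpleGraph V) {a b : V} (h : G.Adj a b) :
    (G.induce {a, b}).Connected := by
  rw [SimpleGraph.connected_iff]
  refine ⟨?_, ⟨⟨a, by simp⟩⟩⟩
  have key : ∀ c : ({a, b} : Set V), (G.induce {a, b}).Reachable ⟨a, by simp⟩ c := by
    rintro ⟨c, hc⟩
    rcases hc with rfl | hc
    · rfl
    · rcases hc with rfl
      exact SimpleGraph.Adj.reachable (by simpa using h)
  intro c d
  exact (key c).symm.trans (key d)

lemma pair_conn_adj (G : SimpleGraph V) {a b : V} (hab : a ≠ b)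
    (h : (G.induce {a, b}).Connected) : G.Adj a b := by
  have hr := h.preconnected ⟨a, by simp⟩ ⟨b, by simp⟩
  obtain ⟨p⟩ := hr
  cases p with
  | nil => simp at hab
  | @cons _ c _ h' p' =>
    rcases c with ⟨c, hc⟩
    have hadj : G.Adj a c := by simpa using h'
    rcases hc with rfl | hc
    · exact absurd hadj (G.irrefl)
    · rcases hc with rfl
      exact hadj




section helpers
variable [Fintype V] [Nonempty V] {G : SimpleGraph V}

lemma no_small_cds (h3 : G.cdn = 3) (D : Finset V) (hcard : D.card ≤ 2)
    (h : G.IsCDS ↑D) : False := by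
  have : G.cdn ≤ D.card := Nat.sInf_le ⟨D, rfl, h⟩
  omega

lemma exists_small_cds (hG : G.IsCritical3) {u v : V} (huv : u ≠ v) (hna : ¬G.Adj u v) :
    ∃ D : Finset V, D.card ≤ 2 ∧ (G.addEdge u v).IsCDS ↑D := by
  have hne : ((Fintype.card V) ∈ {n | ∃ D : Finset V, D.card = n ∧ (G.addEdge u v).IsCDS ↑D}) := by
    refine ⟨Finset.univ, Finset.card_univ, fun z => Or.inl (by simp), ?_⟩
    have hconn : (G.addEdge u v).Connected := hG.1.mono le_sup_left
    rw [Finset.coe_univ]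
    exact ((G.addEdge u v).induceUnivIso.connected_iff).mpr hconn
  have hlt := hG.2.2 u v huv hna
  have hmem := Nat.sInf_mem ⟨_, hne⟩
  obtain ⟨D, hDc, hD⟩ := hmem
  exact ⟨D, by rw [hDc]; unfold SimpleGraph.cdn at hlt; omega, hD⟩

lemma two_cds_contra (h3 : G.cdn = 3) {a b : V} (hab : G.Adj a b)
    (hdom : ∀ z, z = a ∨ z = b ∨ G.Adj a z ∨ G.Adj b z) : False := by
  classical
  refine no_small_cds h3 {a, b} Finset.card_le_two ⟨?_, ?_⟩
  · intro z
    rcases hdom z with rfl | rfl | h | h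
    · exact Or.inl (by simp)
    · exact Or.inl (by simp)
    · exact Or.inr ⟨a, by simp, h⟩
    · exact Or.inr ⟨b, by simp, h⟩
  · have : (↑({a, b} : Finset V) : Set V) = {a, b} := by simp
    rw [this]
    exact pair_conn G hab

def DomEx (G : SimpleGraph V) (a w t : V) : Prop :=
  ∀ z, z ≠ t → z = a ∨ z = w ∨ G.Adj a z ∨ G.Adj w z

lemma pair_lemma (hG : G.IsCritical3) {u v : V} (huv : u ≠ v) (hna : ¬G.Adj u v) :
    (∀ z, z = u ∨ z = v ∨ G.Adj u z ∨ G.Adj v z) ∨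
    (∃ w, G.Adj u w ∧ ¬G.Adj v w ∧ DomEx G u w v) ∨
    (∃ w, G.Adj v w ∧ ¬G.Adj u w ∧ DomEx G v w u) := by
  classical
  obtain ⟨D, hD2, hdom, hconn⟩ := exists_small_cds hG huv hna
  set G' := G.addEdge u v with hG'
  -- basic adj facts
  have hadj' : ∀ a b, G'.Adj a b ↔ G.Adj a b ∨ ((a = u ∧ b = v ∨ a = v ∧ b = u) ∧ a ≠ b) :=
    addEdge_adj G u v
  interval_cases h : D.card
  · -- card 0
    exfalso
    rw [Finset.card_eq_zero] at h
    subst h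
    rcases hdom (Classical.arbitrary V) with hz | ⟨w, hw, _⟩
    · simp at hz
    · simp at hw
  · -- card 1
    rw [Finset.card_eq_one] at h
    obtain ⟨w, rfl⟩ := h
    have hdw : ∀ z, z = w ∨ G'.Adj w z := by
      intro z
      rcases hdom z with hz | ⟨w', hw', hadj⟩
      · simp at hz; exact Or.inl hz
      · simp at hw'; subst hw'; exact Or.inr hadj
    by_cases hwu : w = u
    · subst hwu
      left
      intro z
      rcases hdw z with rfl | hz
      · exact Or.inl rfl
      · rw [hadj'] at hz
        rcases hz with h | ⟨h1 | h1, _⟩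
        · exact Or.inr (Or.inr (Or.inl h))
        · exact Or.inr (Or.inl h1.2)
        · exact absurd h1.1 huv
    by_cases hwv : w = v
    · subst hwv
      left
      intro z
      rcases hdw z with rfl | hz
      · exact Or.inr (Or.inl rfl)
      · rw [hadj'] at hz
        rcases hz with h | ⟨h1 | h1, _⟩
        · exact Or.inr (Or.inr (Or.inr h))
        · exact absurd h1.1 (Ne.symm huv)  -- w = v = u? h1 : v = u ∧ z = v
        · exact Or.inl h1.2
    · exfalso
      refine no_small_cds hG.2.1 {w} (by simp) ⟨?_, ?_⟩
      · intro z
        rcases hdw z with rfl | hz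
        · exact Or.inl (by simp)
        · rw [hadj'] at hz
          rcases hz with h | ⟨h1 | h1, _⟩
          · exact Or.inr ⟨w, by simp, h⟩
          · exact absurd h1.1 hwu
          · exact absurd h1.1 hwv
      · have : (↑({w} : Finset V) : Set V) = {w} := by simp
        rw [this]; exact singleton_conn G w
  · -- card 2
    rw [Finset.card_eq_two] at h
    obtain ⟨a, b, hab, rfl⟩ := h
    have hDset : (↑({a, b} : Finset V) : Set V) = {a, b} := by simp
    rw [hDset] at hconn
    have hab' : G'.Adj a b := pair_conn_adj G' hab hconn
    have hdab : ∀ z, z = a ∨ z = b ∨ G'.Adj a z ∨ G'.Adj b z := by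
      intro z
      rcases hdom z with hz | ⟨w', hw', hadj⟩
      · simp at hz; tauto
      · simp at hw'
        rcases hw' with rfl | rfl
        · exact Or.inr (Or.inr (Or.inl hadj))
        · exact Or.inr (Or.inr (Or.inr hadj))
    -- helper: adjacency in G' to a vertex not in {u,v} is adjacency in G
    have conv : ∀ p z, z ≠ u → z ≠ v → (G'.Adj p z → G.Adj p z) := by
      intro p z h1 h2 hz
      rw [hadj'] at hz
      rcases hz with h | ⟨h3 | h3, _⟩
      · exact h
      · exact absurd h3.2 h2
      · exact absurd h3.2 h1
    -- case analysis on membership of u, v in {a, b}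
    by_cases hua : u = a ∨ u = b
    · by_cases hva : v = a ∨ v = b
      · -- {a,b} = {u,v}
        left
        have huv' : (u = a ∧ v = b) ∨ (u = b ∧ v = a) := by
          rcases hua with rfl | rfl <;> rcases hva with rfl | rfl <;> simp_all
        intro z
        by_cases hzu : z = u
        · exact Or.inl hzu
        by_cases hzv : z = v
        · exact Or.inr (Or.inl hzv)
        rcases huv' with ⟨h1, h2⟩ | ⟨h1, h2⟩ <;> subst h1 <;> subst h2 <;>
          rcases hdab z with rfl | rfl | hz | hz
        · exact absurd rfl hzu
        · exact absurd rfl hzv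
        · exact Or.inr (Or.inr (Or.inl (conv _ _ hzu hzv hz)))
        · exact Or.inr (Or.inr (Or.inr (conv _ _ hzu hzv hz)))
        · exact absurd rfl hzv
        · exact absurd rfl hzu
        · exact Or.inr (Or.inr (Or.inr (conv _ _ hzu hzv hz)))
        · exact Or.inr (Or.inr (Or.inl (conv _ _ hzu hzv hz)))
      · -- u ∈ {a,b}, v ∉ {a,b} : D = {u, w}
        push_neg at hva
        -- normalize so that a = u
        have main : ∀ w, w ≠ u → w ≠ v → G'.Adj u w →
            (∀ z, z = u ∨ z = w ∨ G'.Adj u z ∨ G'.Adj w z) →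
            (∃ w, G.Adj u w ∧ ¬G.Adj v w ∧ DomEx G u w v) := by
          intro w hwu hwv huw hdz
          have huwG : G.Adj u w := by
            rw [hadj'] at huw
            rcases huw with h | ⟨h3 | h3, _⟩
            · exact h
            · exact absurd h3.2 hwv
            · exact absurd h3.1 huv
          have hnvw : ¬G.Adj v w := by
            intro hvw
            refine no_small_cds hG.2.1 {u, w} Finset.card_le_two ⟨?_, ?_⟩
            · intro z
              by_cases hzv : z = v
              · exact Or.inr ⟨w, by simp, hzv ▸ hvw.symm⟩
              rcases hdz z with rfl | rfl | hz | hz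
              · exact Or.inl (by simp)
              · exact Or.inl (by simp)
              · by_cases hzu : z = u
                · exact Or.inl (by simp [hzu])
                · exact Or.inr ⟨u, by simp, conv _ _ hzu hzv hz⟩
              · by_cases hzu : z = u
                · exact Or.inl (by simp [hzu])
                · exact Or.inr ⟨w, by simp, conv _ _ hzu hzv hz⟩
            · have : (↑({u, w} : Finset V) : Set V) = {u, w} := by simp
              rw [this]; exact pair_conn G huwG
          refine ⟨w, huwG, hnvw, ?_⟩
          intro z hzv
          rcases hdz z with rfl | rfl | hz | hz
          · exact Or.inl rfl
          · exact Or.inr (Or.inl rfl)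
          · by_cases hzu : z = u
            · exact Or.inl hzu
            · exact Or.inr (Or.inr (Or.inl (conv _ _ hzu hzv hz)))
          · by_cases hzu : z = u
            · exact Or.inl hzu
            · exact Or.inr (Or.inr (Or.inr (conv _ _ hzu hzv hz)))
        right; left
        rcases hua with rfl | rfl
        · exact main b (by rintro rfl; exact hab rfl) (Ne.symm hva.2) hab' (by intro z; rcases hdab z with h|h|h|h <;> tauto)
        · exact main a (by rintro rfl; exact hab rfl) (Ne.symm hva.1) hab'.symm (by intro z; rcases hdab z with h|h|h|h <;> tauto)
    · by_cases hva : v = a ∨ v = b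
      · -- v ∈ {a,b}, u ∉
        push_neg at hua
        have main : ∀ w, w ≠ v → w ≠ u → G'.Adj v w →
            (∀ z, z = v ∨ z = w ∨ G'.Adj v z ∨ G'.Adj w z) →
            (∃ w, G.Adj v w ∧ ¬G.Adj u w ∧ DomEx G v w u) := by
          intro w hwv hwu hvw hdz
          have hvwG : G.Adj v w := by
            rw [hadj'] at hvw
            rcases hvw with h | ⟨h3 | h3, _⟩
            · exact h
            · exact absurd h3.1 (Ne.symm huv)
            · exact absurd h3.2 hwu
          have hnuw : ¬G.Adj u w := by
            intro huw
            refine no_small_cds hG.2.1 {v, w} Finset.card_le_two ⟨?_, ?_⟩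
            · intro z
              by_cases hzu : z = u
              · exact Or.inr ⟨w, by simp, hzu ▸ huw.symm⟩
              rcases hdz z with rfl | rfl | hz | hz
              · exact Or.inl (by simp)
              · exact Or.inl (by simp)
              · by_cases hzv : z = v
                · exact Or.inl (by simp [hzv])
                · exact Or.inr ⟨v, by simp, conv _ _ hzu hzv hz⟩
              · by_cases hzv : z = v
                · exact Or.inl (by simp [hzv])
                · exact Or.inr ⟨w, by simp, conv _ _ hzu hzv hz⟩
            · have : (↑({v, w} : Finset V) : Set V) = {v, w} := by simp
              rw [this]; exact pair_conn G hvwG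
          refine ⟨w, hvwG, hnuw, ?_⟩
          intro z hzu
          rcases hdz z with rfl | rfl | hz | hz
          · exact Or.inl rfl
          · exact Or.inr (Or.inl rfl)
          · by_cases hzv : z = v
            · exact Or.inl hzv
            · exact Or.inr (Or.inr (Or.inl (conv _ _ hzu hzv hz)))
          · by_cases hzv : z = v
            · exact Or.inl hzv
            · exact Or.inr (Or.inr (Or.inr (conv _ _ hzu hzv hz)))
        right; right
        rcases hva with rfl | rfl
        · exact main b (by rintro rfl; exact hab rfl) (Ne.symm hua.2) hab' (by intro z; rcases hdab z with h|h|h|h <;> tauto)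
        · exact main a (by rintro rfl; exact hab rfl) (Ne.symm hua.1) hab'.symm (by intro z; rcases hdab z with h|h|h|h <;> tauto)
      · -- neither u nor v in {a, b} : D is a CDS of G, contradiction
        exfalso
        push_neg at hua hva
        have habG : G.Adj a b := by
          rw [hadj'] at hab'
          rcases hab' with h | ⟨h3 | h3, _⟩
          · exact h
          · exact absurd h3.1.symm hua.1
          · exact absurd h3.1.symm hva.1
        refine no_small_cds hG.2.1 {a, b} Finset.card_le_two ⟨?_, ?_⟩
        · intro z
          rcases hdab z with rfl | rfl | hz | hz
          · exact Or.inl (by simp)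
          · exact Or.inl (by simp)
          · rw [hadj'] at hz
            rcases hz with h | ⟨h3 | h3, _⟩
            · exact Or.inr ⟨a, by simp, h⟩
            · exact absurd h3.1.symm hua.1
            · exact absurd h3.1.symm hva.1
          · rw [hadj'] at hz
            rcases hz with h | ⟨h3 | h3, _⟩
            · exact Or.inr ⟨b, by simp, h⟩
            · exact absurd h3.1.symm hua.2
            · exact absurd h3.1.symm hva.2
        · have : (↑({a, b} : Finset V) : Set V) = {a, b} := by simp
          rw [this]; exact pair_conn G habG

/-- Witness predicate: `w` is adjacent to `x`, outside `S`, non-adjacent to `t`,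
and adjacent to every vertex of `S \ N[x]` other than `t`. -/
def Wit (G : SimpleGraph V) (S : Finset V) (x t w : V) : Prop :=
  G.Adj x w ∧ w ∉ S ∧ ¬G.Adj w t ∧
    ∀ s ∈ S, s ≠ x → ¬G.Adj x s → s ≠ t → G.Adj w s

lemma wit_pair (hG : G.IsCritical3) {S : Finset V} (hS : G.IsIndepSet' ↑S) (x : V)
    {t1 t2 : V} (h1 : t1 ∈ S) (h2 : t2 ∈ S) (h1x : ¬G.Adj x t1) (h2x : ¬G.Adj x t2)
    (h1xn : t1 ≠ x) (h2xn : t2 ≠ x) (hne : t1 ≠ t2) :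
    (∃ w, Wit G S x t1 w) ∨ (∃ w, Wit G S x t2 w) := by
  have hnadj : ¬G.Adj t1 t2 := hS h1 h2 hne
  have main : ∀ a b : V, a ∈ S → b ∈ S → ¬G.Adj x a → ¬G.Adj x b → a ≠ x → b ≠ x →
      a ≠ b → ∀ w, G.Adj a w → ¬G.Adj b w → DomEx G a w b → Wit G S x b w := by
    intro a b ha hb hxa hxb hax hbx hab w hw1 hw2 hdx
    have hwS : w ∉ S := by
      intro hwmem
      exact hS ha hwmem (G.ne_of_adj hw1) hw1
    have hxw : G.Adj x w := by
      rcases hdx x (Ne.symm hbx) with h | h | h | h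
      · exact absurd h.symm hax
      · exact absurd (h ▸ hw1).symm hxa
      · exact absurd h.symm hxa
      · exact h.symm
    refine ⟨hxw, hwS, fun hh => hw2 hh.symm, ?_⟩
    intro s hs hsx hxs hsb
    by_cases hsa : s = a
    · subst hsa; exact hw1.symm
    rcases hdx s hsb with h | h | h | h
    · exact absurd h hsa
    · exact absurd (h ▸ hs) hwS
    · exact absurd h (hS ha hs (Ne.symm hsa))
    · exact h
  rcases pair_lemma hG hne hnadj with hall | ⟨w, hw1, hw2, hdx⟩ | ⟨w, hw1, hw2, hdx⟩
  · exfalso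
    rcases hall x with h | h | h | h
    · exact h1xn h.symm
    · exact h2xn h.symm
    · exact h1x h.symm
    · exact h2x h.symm
  · exact Or.inr ⟨w, main t1 t2 h1 h2 h1x h2x h1xn h2xn hne w hw1 hw2 hdx⟩
  · exact Or.inl ⟨w, main t2 t1 h2 h1 h2x h1x h2xn h1xn (Ne.symm hne) w hw1 hw2 hdx⟩

variable [DecidableRel G.Adj] [DecidableEq V]

lemma key_core (hG : G.IsCritical3) {S : Finset V} (hS : G.IsIndepSet' ↑S) (x : V) :
    ∃ (T A : Finset V) (F : V → V),
      T = S.filter (fun t => ¬G.Adj x t ∧ t ≠ x) ∧ A ⊆ T ∧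
      T.card ≤ A.card + 1 ∧
      (∀ t ∈ A, Wit G S x t (F t)) ∧
      Set.InjOn F ↑A ∧
      (A.image F) ∪ (S ∩ G.neighborFinset x) ⊆ G.neighborFinset x ∧
      Disjoint (A.image F) (S ∩ G.neighborFinset x) ∧
      S.card ≤ (S ∩ G.neighborFinset x).card + T.card + 1 := by
  classical
  set T := S.filter (fun t => ¬G.Adj x t ∧ t ≠ x) with hT
  set A := T.filter (fun t => ∃ w, Wit G S x t w) with hA
  set F : V → V := fun t => if h : ∃ w, Wit G S x t w then h.choose else x with hF
  have hmemT : ∀ t, t ∈ T ↔ t ∈ S ∧ ¬G.Adj x t ∧ t ≠ x := by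
    intro t; simp [hT, Finset.mem_filter]
  have hwitA : ∀ t ∈ A, Wit G S x t (F t) := by
    intro t ht
    rw [hA, Finset.mem_filter] at ht
    have h := ht.2
    simp only [hF]
    rw [dif_pos h]
    exact h.choose_spec
  refine ⟨T, A, F, rfl, by rw [hA]; exact Finset.filter_subset _ _, ?_, hwitA, ?_, ?_, ?_, ?_⟩
  · -- T.card ≤ A.card + 1
    have hBone : (T \ A).card ≤ 1 := by
      rw [Finset.card_le_one]
      intro t1 ht1 t2 ht2
      by_contra hne
      rw [Finset.mem_sdiff] at ht1 ht2
      have m1 := (hmemT t1).mp ht1.1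
      have m2 := (hmemT t2).mp ht2.1
      rcases wit_pair hG hS x m1.1 m2.1 m1.2.1 m2.2.1 m1.2.2 m2.2.2 hne with h | h
      · exact ht1.2 (by rw [hA, Finset.mem_filter]; exact ⟨ht1.1, h⟩)
      · exact ht2.2 (by rw [hA, Finset.mem_filter]; exact ⟨ht2.1, h⟩)
    have hsub2 : A ⊆ T := by rw [hA]; exact Finset.filter_subset _ _
    have := Finset.card_sdiff_add_card_eq_card hsub2
    omega
  · -- InjOn
    intro t1 ht1 t2 ht2 heq
    by_contra hne
    have w1 := hwitA t1 (Finset.mem_coe.mp ht1)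
    have w2 := hwitA t2 (Finset.mem_coe.mp ht2)
    have m1 := (hmemT t1).mp ((by rw [hA]; exact Finset.filter_subset _ _ : A ⊆ T) (Finset.mem_coe.mp ht1))
    -- F t2 is adjacent to t1 (since t1 ∈ S, t1 ≠ x, ¬Adj x t1, t1 ≠ t2)
    have hadj : G.Adj (F t2) t1 := w2.2.2.2 t1 m1.1 m1.2.2 m1.2.1 hne
    rw [← heq] at hadj
    exact w1.2.2.1 hadj
  · -- union subset
    intro w hw
    rcases Finset.mem_union.mp hw with hw | hw
    · obtain ⟨t, ht, rfl⟩ := Finset.mem_image.mp hw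
      exact (G.mem_neighborFinset x _).mpr (hwitA t ht).1
    · exact (Finset.mem_inter.mp hw).2
  · -- disjoint
    rw [Finset.disjoint_left]
    intro w hw hw2
    obtain ⟨t, ht, rfl⟩ := Finset.mem_image.mp hw
    exact (hwitA t ht).2.1 (Finset.mem_inter.mp hw2).1
  · -- card split
    have hsub : S ⊆ (S ∩ G.neighborFinset x) ∪ T ∪ {x} := by
      intro s hs
      by_cases h1 : G.Adj x s
      · exact Finset.mem_union.mpr (Or.inl (Finset.mem_union.mpr (Or.inl
          (Finset.mem_inter.mpr ⟨hs, (G.mem_neighborFinset x s).mpr h1⟩))))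
      by_cases h2 : s = x
      · exact Finset.mem_union.mpr (Or.inr (by simp [h2]))
      · exact Finset.mem_union.mpr (Or.inl (Finset.mem_union.mpr (Or.inr
          ((hmemT s).mpr ⟨hs, h1, h2⟩))))
    calc S.card ≤ ((S ∩ G.neighborFinset x) ∪ T ∪ {x}).card := Finset.card_le_card hsub
      _ ≤ ((S ∩ G.neighborFinset x) ∪ T).card + ({x} : Finset V).card := Finset.card_union_le _ _
      _ ≤ (S ∩ G.neighborFinset x).card + T.card + 1 := by
          have := Finset.card_union_le (S ∩ G.neighborFinset x) T
          simp only [Finset.card_singleton]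
          omega

lemma key (hG : G.IsCritical3) {S : Finset V} (hS : G.IsIndepSet' ↑S) (x : V) :
    S.card ≤ G.degree x + 2 := by
  classical
  obtain ⟨T, A, F, hT, hAT, hTA, hwitA, hinj, hsub, hdisj, hsplit⟩ := key_core hG hS x
  have h1 : (A.image F).card + (S ∩ G.neighborFinset x).card ≤ G.degree x := by
    rw [← Finset.card_union_of_disjoint hdisj]
    exact le_trans (Finset.card_le_card hsub) (le_of_eq rfl)
  have h2 : (A.image F).card = A.card := Finset.card_image_of_injOn hinj
  unfold SimpleGraph.degree at h1 ⊢
  omega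

lemma struct (hG : G.IsCritical3) {S : Finset V} (hS : G.IsIndepSet' ↑S) (x : V)
    (hcard : S.card = G.degree x + 2) :
    x ∈ S ∧ ∃ (F : V → V) (t0 : V), t0 ∈ S ∧ t0 ≠ x ∧
      (∀ w ∈ G.neighborFinset x, ∃ t, t ∈ S ∧ t ≠ x ∧ t ≠ t0 ∧ F t = w) ∧
      (∀ t, t ∈ S → t ≠ x → t ≠ t0 →
        (G.Adj x (F t) ∧ F t ∉ S ∧ ¬G.Adj (F t) t ∧ ∀ s ∈ S, s ≠ t → G.Adj (F t) s)) ∧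
      (∀ a ∈ G.neighborFinset x, ∀ b ∈ G.neighborFinset x, a ≠ b → G.Adj a b) := by
  classical
  obtain ⟨T, A, F, hT, hAT, hTA, hwitA, hinj, hsub, hdisj, hsplit⟩ := key_core hG hS x
  have hmemT : ∀ t, t ∈ T ↔ t ∈ S ∧ ¬G.Adj x t ∧ t ≠ x := by
    intro t; rw [hT]; simp [Finset.mem_filter]
  have himgcard : (A.image F).card = A.card := Finset.card_image_of_injOn hinj
  have h1 : (A.image F).card + (S ∩ G.neighborFinset x).card ≤ G.degree x := by
    rw [← Finset.card_union_of_disjoint hdisj]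
    exact Finset.card_le_card hsub
  -- x ∈ S
  have hxS : x ∈ S := by
    by_contra hxS
    have hsub2 : S ⊆ (S ∩ G.neighborFinset x) ∪ T := by
      intro s hs
      by_cases h1 : G.Adj x s
      · exact Finset.mem_union.mpr (Or.inl
          (Finset.mem_inter.mpr ⟨hs, (G.mem_neighborFinset x s).mpr h1⟩))
      · refine Finset.mem_union.mpr (Or.inr ((hmemT s).mpr ⟨hs, h1, ?_⟩))
        rintro rfl; exact hxS hs
    have := Finset.card_le_card hsub2
    have := Finset.card_union_le (S ∩ G.neighborFinset x) T
    omega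
  -- S ∩ N(x) = ∅
  have hSNx : S ∩ G.neighborFinset x = ∅ := by
    rw [Finset.eq_empty_iff_forall_notMem]
    intro s hs
    rw [Finset.mem_inter, G.mem_neighborFinset] at hs
    exact hS hxS hs.1 (G.ne_of_adj hs.2) hs.2
  -- T = S.erase x
  have hTerase : T = S.erase x := by
    ext t
    rw [hmemT, Finset.mem_erase]
    constructor
    · rintro ⟨h1, _, h3⟩; exact ⟨h3, h1⟩
    · rintro ⟨h1, h2⟩
      exact ⟨h2, fun h => hS hxS h2 (Ne.symm h1) h, h1⟩
  have hTcard : T.card = G.degree x + 1 := by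
    rw [hTerase, Finset.card_erase_of_mem hxS]; omega
  have hAcard : A.card = G.degree x := by
    have : A.card ≤ G.degree x := by rw [hSNx] at h1; simpa [himgcard] using h1
    omega
  -- T \ A = {t0}
  have hBcard : (T \ A).card = 1 := by
    have := Finset.card_sdiff_add_card_eq_card hAT
    omega
  obtain ⟨t0, hB⟩ := Finset.card_eq_one.mp hBcard
  have ht0T : t0 ∈ T := by
    have : t0 ∈ T \ A := by rw [hB]; exact Finset.mem_singleton_self t0
    exact (Finset.mem_sdiff.mp this).1
  have ht0m := (hmemT t0).mp ht0T
  -- A.image F = N(x)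
  have himg : A.image F = G.neighborFinset x := by
    apply Finset.eq_of_subset_of_card_le
    · exact fun w hw => hsub (Finset.mem_union.mpr (Or.inl hw))
    · rw [himgcard, hAcard]
      exact le_of_eq rfl
  have hmemA : ∀ t, t ∈ A ↔ t ∈ S ∧ t ≠ x ∧ t ≠ t0 := by
    intro t
    constructor
    · intro ht
      have htT := hAT ht
      have hm := (hmemT t).mp htT
      refine ⟨hm.1, hm.2.2, ?_⟩
      rintro rfl
      have : t ∈ T \ A := by rw [hB]; exact Finset.mem_singleton_self t
      exact (Finset.mem_sdiff.mp this).2 ht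
    · rintro ⟨h1, h2, h3⟩
      have htT : t ∈ T := (hmemT t).mpr ⟨h1, fun h => hS hxS h1 (Ne.symm h2) h, h2⟩
      by_contra hnA
      have : t ∈ T \ A := Finset.mem_sdiff.mpr ⟨htT, hnA⟩
      rw [hB, Finset.mem_singleton] at this
      exact h3 this
  -- full witness properties
  have hprops : ∀ t, t ∈ S → t ≠ x → t ≠ t0 →
      (G.Adj x (F t) ∧ F t ∉ S ∧ ¬G.Adj (F t) t ∧ ∀ s ∈ S, s ≠ t → G.Adj (F t) s) := by
    intro t h1 h2 h3
    have htA : t ∈ A := (hmemA t).mpr ⟨h1, h2, h3⟩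
    obtain ⟨w1, w2, w3, w4⟩ := hwitA t htA
    refine ⟨w1, w2, w3, ?_⟩
    intro s hs hst
    by_cases hsx : s = x
    · subst hsx; exact w1.symm
    · exact w4 s hs hsx (fun h => hS hxS hs (Ne.symm hsx) h) hst
  have hsurj : ∀ w ∈ G.neighborFinset x, ∃ t, t ∈ S ∧ t ≠ x ∧ t ≠ t0 ∧ F t = w := by
    intro w hw
    rw [← himg] at hw
    obtain ⟨t, ht, rfl⟩ := Finset.mem_image.mp hw
    have := (hmemA t).mp ht
    exact ⟨t, this.1, this.2.1, this.2.2, rfl⟩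
  refine ⟨hxS, F, t0, ht0m.1, ht0m.2.2, hsurj, hprops, ?_⟩
  -- clique
  intro a ha b hb hab
  obtain ⟨t, htS, htx, htt0, rfl⟩ := hsurj a ha
  obtain ⟨t', ht'S, ht'x, ht't0, rfl⟩ := hsurj b hb
  have htt' : t ≠ t' := by rintro rfl; exact hab rfl
  have hp := hprops t htS htx htt0
  have hp' := hprops t' ht'S ht'x ht't0
  have hnadj : ¬G.Adj t t' := hS htS ht'S htt'
  rcases pair_lemma hG htt' hnadj with hall | ⟨w, hw1, hw2, hdx⟩ | ⟨w, hw1, hw2, hdx⟩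
  · exfalso
    rcases hall x with h | h | h | h
    · exact htx h.symm
    · exact ht'x h.symm
    · exact hS hxS htS (Ne.symm htx) h.symm
    · exact hS hxS ht'S (Ne.symm ht'x) h.symm
  · -- w witnesses for pair (t, t'), w ∼ t, w ≁ t'; show w = F t'
    have hxw : G.Adj x w := by
      rcases hdx x (Ne.symm ht'x) with h | h | h | h
      · exact absurd h.symm htx
      · exact absurd (h ▸ hw1).symm (fun hh => hS hxS htS (Ne.symm htx) hh)
      · exact absurd h.symm (fun hh => hS hxS htS (Ne.symm htx) hh)
      · exact h.symm
    obtain ⟨r, hrS, hrx, hrt0, hreq⟩ := hsurj w ((G.mem_neighborFinset x w).mpr hxw)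
    have hrprops := hprops r hrS hrx hrt0
    have hrt' : r = t' := by
      by_contra hne
      exact hw2 ((hreq ▸ hrprops.2.2.2 t' ht'S (Ne.symm hne)).symm)
    subst hrt'
    subst hreq
    -- now hdx : DomEx G t (F t') t'
    rcases hdx (F t) (fun h => hp.2.1 (by rw [h]; exact ht'S)) with h | h | h | h
    · exact absurd (show F t ∈ S by rw [h]; exact htS) hp.2.1
    · exact absurd (hinj (Finset.mem_coe.mpr ((hmemA t).mpr ⟨htS, htx, htt0⟩))
        (Finset.mem_coe.mpr ((hmemA r).mpr ⟨ht'S, ht'x, ht't0⟩)) h) htt'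
    · exact absurd h.symm hp.2.2.1
    · exact h.symm
  · -- symmetric: w ∼ t', w ≁ t; w = F t
    have hxw : G.Adj x w := by
      rcases hdx x (Ne.symm htx) with h | h | h | h
      · exact absurd h.symm ht'x
      · exact absurd (h ▸ hw1).symm (fun hh => hS hxS ht'S (Ne.symm ht'x) hh)
      · exact absurd h.symm (fun hh => hS hxS ht'S (Ne.symm ht'x) hh)
      · exact h.symm
    obtain ⟨r, hrS, hrx, hrt0, hreq⟩ := hsurj w ((G.mem_neighborFinset x w).mpr hxw)
    have hrprops := hprops r hrS hrx hrt0
    have hrt : r = t := by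
      by_contra hne
      exact hw2 ((hreq ▸ hrprops.2.2.2 t htS (Ne.symm hne)).symm)
    subst hrt
    subst hreq
    rcases hdx (F t') (fun h => hp'.2.1 (by rw [h]; exact htS)) with h | h | h | h
    · exact absurd (show F t' ∈ S by rw [h]; exact ht'S) hp'.2.1
    · exact absurd (hinj (Finset.mem_coe.mpr ((hmemA t').mpr ⟨ht'S, ht'x, ht't0⟩))
        (Finset.mem_coe.mpr ((hmemA r).mpr ⟨htS, htx, htt0⟩)) h) (Ne.symm htt')
    · exact absurd h.symm hp'.2.2.1
    · exact h

lemma unique_min (hG : G.IsCritical3) {S : Finset V} (hS : G.IsIndepSet' ↑S)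
    (hbig : 4 ≤ S.card) {x x' : V}
    (hx : S.card = G.degree x + 2) (hx' : S.card = G.degree x' + 2) (hne : x ≠ x') : False := by
  classical
  obtain ⟨hxS, F, t0, ht0S, ht0x, hsurj, hprops, hclique⟩ := struct hG hS x hx
  obtain ⟨hx'S, F', t0', ht0'S, ht0'x, hsurj', hprops', hclique'⟩ := struct hG hS x' hx'
  have hdeg : G.degree x = G.degree x' := by omega
  have hnadj : ¬G.Adj x x' := hS hxS hx'S hne
  -- a third vertex of S
  have hs2 : ∃ s2, s2 ∈ S ∧ s2 ≠ x ∧ s2 ≠ x' := by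
    have : 1 ≤ ((S.erase x).erase x').card := by
      have e1 := Finset.card_erase_of_mem hxS
      have h2 : x' ∈ S.erase x := Finset.mem_erase.mpr ⟨Ne.symm hne, hx'S⟩
      have e2 := Finset.card_erase_of_mem h2
      omega
    have hpos : 0 < ((S.erase x).erase x').card := by omega
    obtain ⟨s2, hs2⟩ := Finset.card_pos.mp hpos
    rw [Finset.mem_erase, Finset.mem_erase] at hs2
    exact ⟨s2, hs2.2.2, hs2.2.1, hs2.1⟩
  obtain ⟨s2, hs2S, hs2x, hs2x'⟩ := hs2
  -- refute case 1 of pair_lemma on (x, x')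
  have hcase1 : ¬(∀ z, z = x ∨ z = x' ∨ G.Adj x z ∨ G.Adj x' z) := by
    intro hall
    rcases hall s2 with h | h | h | h
    · exact hs2x h
    · exact hs2x' h
    · exact hS hxS hs2S (Ne.symm hs2x) h
    · exact hS hx'S hs2S (Ne.symm hs2x') h
  by_cases hx't0 : x' = t0
  · -- N(x) = N(x')
    have hNN : G.neighborFinset x ⊆ G.neighborFinset x' := by
      intro w hw
      obtain ⟨t, htS, htx, htt0, rfl⟩ := hsurj w hw
      have : G.Adj (F t) x' := (hprops t htS htx htt0).2.2.2 x' hx'S (by rw [hx't0]; exact Ne.symm htt0)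
      exact (G.mem_neighborFinset x' _).mpr this.symm
    have hNNeq : G.neighborFinset x = G.neighborFinset x' := by
      apply Finset.eq_of_subset_of_card_le hNN
      rw [SimpleGraph.card_neighborFinset_eq_degree, SimpleGraph.card_neighborFinset_eq_degree]
      omega
    rcases pair_lemma hG hne hnadj with hall | ⟨w, hw1, hw2, _⟩ | ⟨w, hw1, hw2, _⟩
    · exact hcase1 hall
    · exact hw2 (by
        have : w ∈ G.neighborFinset x := (G.mem_neighborFinset x w).mpr hw1
        rw [hNNeq] at this
        exact (G.mem_neighborFinset x' w).mp this)
    · exact hw2 (by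
        have : w ∈ G.neighborFinset x' := (G.mem_neighborFinset x' w).mpr hw1
        rw [← hNNeq] at this
        exact (G.mem_neighborFinset x w).mp this)
  · -- x' ≠ t0 : let n' = F x'
    have hpn := hprops x' hx'S (Ne.symm hne) hx't0
    set n' : V := F x' with hn'
    have hn'NB : n' ∈ G.neighborFinset x := (G.mem_neighborFinset x n').mpr hpn.1
    have hsubNB : (G.neighborFinset x).erase n' ⊆ G.neighborFinset x' := by
      intro w hw
      rw [Finset.mem_erase] at hw
      obtain ⟨t, htS, htx, htt0, rfl⟩ := hsurj w hw.2
      have htx' : x' ≠ t := by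
        rintro rfl; exact hw.1 rfl
      have : G.Adj (F t) x' := (hprops t htS htx htt0).2.2.2 x' hx'S htx'
      exact (G.mem_neighborFinset x' _).mpr this.symm
    have hn'notNB' : n' ∉ G.neighborFinset x' := by
      rw [G.mem_neighborFinset]
      intro h; exact hpn.2.2.1 h.symm
    have hzcard : (G.neighborFinset x' \ (G.neighborFinset x).erase n').card = 1 := by
      rw [Finset.card_sdiff_of_subset hsubNB, Finset.card_erase_of_mem hn'NB,
        SimpleGraph.card_neighborFinset_eq_degree, SimpleGraph.card_neighborFinset_eq_degree]
      omega
    obtain ⟨z, hz⟩ := Finset.card_eq_one.mp hzcard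
    have hzmem : z ∈ G.neighborFinset x' \ (G.neighborFinset x).erase n' := by
      rw [hz]; exact Finset.mem_singleton_self z
    rw [Finset.mem_sdiff] at hzmem
    have hx'z : G.Adj x' z := (G.mem_neighborFinset x' z).mp hzmem.1
    have hzn' : z ≠ n' := by
      rintro rfl
      exact hn'notNB' hzmem.1
    have hznotNB : z ∉ G.neighborFinset x := by
      intro h
      exact hzmem.2 (Finset.mem_erase.mpr ⟨hzn', h⟩)
    have hnxz : ¬G.Adj x z := fun h => hznotNB ((G.mem_neighborFinset x z).mpr h)
    have hzx : z ≠ x := by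
      rintro rfl
      exact hnadj hx'z.symm
    have hNB' : G.neighborFinset x' = insert z ((G.neighborFinset x).erase n') := by
      symm
      apply Finset.eq_of_subset_of_card_le
      · intro w hw
        rcases Finset.mem_insert.mp hw with rfl | hw
        · exact hzmem.1
        · exact hsubNB hw
      · rw [Finset.card_insert_of_notMem (fun h => hznotNB (Finset.erase_subset _ _ h)),
          Finset.card_erase_of_mem hn'NB,
          SimpleGraph.card_neighborFinset_eq_degree, SimpleGraph.card_neighborFinset_eq_degree]
        omega
    -- z is adjacent to everything in N(x) \ {n'}
    have hzadj : ∀ w ∈ (G.neighborFinset x).erase n', G.Adj z w := by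
      intro w hw
      refine hclique' z hzmem.1 w (hsubNB hw) ?_
      rintro rfl
      exact hznotNB (Finset.erase_subset _ _ hw)
    -- identify elements of N(x) not adjacent to x' with n'
    have hNBchar : ∀ w ∈ G.neighborFinset x, ¬G.Adj x' w → w = n' := by
      intro w hw hnadj'
      obtain ⟨t, htS, htx, htt0, rfl⟩ := hsurj w hw
      by_cases h : x' = t
      · rw [hn', h]
      · exact absurd ((hprops t htS htx htt0).2.2.2 x' hx'S h).symm hnadj'
    rcases pair_lemma hG hne hnadj with hall | ⟨w0, hw1, hw2, hdx⟩ | ⟨w0, hw1, hw2, hdx⟩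
    · exact hcase1 hall
    · -- w0 = n', {x, n'} dominates V \ {x'}
      have hw0 : w0 = n' := hNBchar w0 ((G.mem_neighborFinset x w0).mpr hw1) hw2
      subst hw0
      have hn'z : G.Adj n' z := by
        rcases hdx z (G.ne_of_adj hx'z).symm with h | h | h | h
        · exact absurd h hzx
        · exact absurd h hzn'
        · exact absurd h hnxz
        · exact h
      refine two_cds_contra hG.2.1 hn'z.symm ?_
      intro u
      by_cases hu : u = x'
      · subst hu; exact Or.inr (Or.inr (Or.inl hx'z.symm))
      rcases hdx u hu with h | h | h | h
      · subst h; exact Or.inr (Or.inr (Or.inr hpn.1.symm))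
      · exact Or.inr (Or.inl h)
      · have huNB : u ∈ G.neighborFinset x := (G.mem_neighborFinset x u).mpr h
        by_cases hun' : u = n'
        · exact Or.inr (Or.inl hun')
        · exact Or.inr (Or.inr (Or.inl (hzadj u (Finset.mem_erase.mpr ⟨hun', huNB⟩))))
      · exact Or.inr (Or.inr (Or.inr h))
    · -- w0 = z, {x', z} dominates V \ {x}
      have hw0 : w0 = z := by
        have : w0 ∈ G.neighborFinset x' := (G.mem_neighborFinset x' w0).mpr hw1
        rw [hNB'] at this
        rcases Finset.mem_insert.mp this with h | h
        · exact h
        · exact absurd ((G.mem_neighborFinset x w0).mp (Finset.erase_subset _ _ h)) hw2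
      rw [hw0] at hw1 hw2 hdx
      have hn'x : n' ≠ x := fun h => (h ▸ hpn.1).ne rfl
      have hn'x' : n' ≠ x' := fun h => hnadj (by rw [← h]; exact hpn.1)
      have hzn'adj : G.Adj z n' := by
        rcases hdx n' hn'x with h | h | h | h
        · exact absurd h hn'x'
        · exact absurd h.symm hzn'
        · exact absurd h.symm hpn.2.2.1
        · exact h
      refine two_cds_contra hG.2.1 hzn'adj.symm ?_
      intro u
      by_cases hu : u = x
      · exact Or.inr (Or.inr (Or.inl (by rw [hu]; exact hpn.1.symm)))
      rcases hdx u hu with h | h | h | h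
      · exact Or.inr (Or.inr (Or.inr (by rw [h]; exact hx'z.symm)))
      · exact Or.inr (Or.inl h)
      · have huNB' : u ∈ G.neighborFinset x' := (G.mem_neighborFinset x' u).mpr h
        rw [hNB'] at huNB'
        rcases Finset.mem_insert.mp huNB' with hh | hh
        · exact Or.inr (Or.inl hh)
        · have hmem := Finset.mem_erase.mp hh
          exact Or.inr (Or.inr (Or.inl (hclique n' hn'NB u hmem.2 (Ne.symm hmem.1))))
      · exact Or.inr (Or.inr (Or.inr h))



theorem stmt_6 {V : Type*} [Fintype V] [Nonempty V] (G : SimpleGraph V)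
    [DecidableRel G.Adj] (hG : G.IsCritical3) (hδ : 2 ≤ G.minDegree) :
    G.indepNum' ≤ G.minDegree + 2 ∧
      (G.indepNum' = G.minDegree + 2 →
        ∃ x : V, G.degree x = G.minDegree ∧
          (∀ y : V, G.degree y = G.minDegree → y = x) ∧
          G.IsClique (insert x (G.neighborSet x))) := by

  classical
  obtain ⟨x0, hx0⟩ := G.exists_minimal_degree_vertex
  have hne : ({n | ∃ s : Finset V, G.IsIndepSet' ↑s ∧ s.card = n}).Nonempty := by
    refine ⟨0, ∅, ?_, Finset.card_empty⟩
    simp [SimpleGraph.IsIndepSet']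
  have hbdd : BddAbove {n | ∃ s : Finset V, G.IsIndepSet' ↑s ∧ s.card = n} := by
    refine ⟨Fintype.card V, ?_⟩
    rintro n ⟨s, _, rfl⟩
    exact Finset.card_le_univ s
  have hle : G.indepNum' ≤ G.minDegree + 2 := by
    refine csSup_le hne ?_
    rintro n ⟨s, hsind, rfl⟩
    calc s.card ≤ G.degree x0 + 2 := key hG hsind x0
      _ = G.minDegree + 2 := by rw [← hx0]
  refine ⟨hle, ?_⟩
  intro heq
  obtain ⟨S, hSind, hScard⟩ := Nat.sSup_mem hne hbdd
  rw [show sSup {n | ∃ s : Finset V, G.IsIndepSet' ↑s ∧ s.card = n} = G.indepNum' from rfl, heq] at hScard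
  have hcardx0 : S.card = G.degree x0 + 2 := by rw [hScard, hx0]
  obtain ⟨hxS, F, t0, ht0S, ht0x, hsurj, hprops, hclique⟩ := struct hG hSind x0 hcardx0
  refine ⟨x0, hx0.symm, ?_, ?_⟩
  · intro y hy
    by_contra hyne
    have hcardy : S.card = G.degree y + 2 := by rw [hScard, ← hy]
    exact unique_min hG hSind (by omega) hcardx0 hcardy (Ne.symm hyne)
  · intro a ha b hb hab
    rcases Set.mem_insert_iff.mp ha with rfl | ha
    · rcases Set.mem_insert_iff.mp hb with rfl | hb
      · exact absurd rfl hab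
      · exact (G.mem_neighborSet a b).mp hb
    · rcases Set.mem_insert_iff.mp hb with rfl | hb
      · exact ((G.mem_neighborSet b a).mp ha).symm
      · exact hclique a ((G.mem_neighborFinset x0 a).mpr ((G.mem_neighborSet x0 a).mp ha))
          b ((G.mem_neighborFinset x0 b).mpr ((G.mem_neighborSet x0 b).mp hb)) hab
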